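/- Absence of arbitrage via consistent prices: on a finite filtered probability space, if there exists a P-martingale Z with Z_t ∈ ri K_t* a.s. for all t (a strictly consistent price process), then the currency market satisfies the no-arbitrage condition: any self-financing portfolio process θ with θ_T ∈ ℝ_+^d a.s. satisfies θ_T ∈ K_T ∩ (−K_T) a.s. (equivalently, the liquidation value of θ_T is zero). -/

import Mathlib

open Finset Pointwise RealInnerProductSpace

noncomputable section

abbrev E (d : ℕ) : Type := EuclideanSpace ℝ (Fin d)

def solvencyCone {d : ℕ} (π : Fin d → Fin d → ℝ) : Set (E d) :=
  {x | ∃ (a : Fin d → ℝ) (b : Fin d → Fin d → ℝ),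
    (∀ i, 0 ≤ a i) ∧ (∀ i j, 0 ≤ b i j) ∧
    x = ∑ i, a i • EuclideanSpace.single i (1 : ℝ) +
        ∑ i, ∑ j, b i j •
          (π i j • EuclideanSpace.single i (1 : ℝ) - EuclideanSpace.single j (1 : ℝ))}

def dualCone {d : ℕ} (K : Set (E d)) : Set (E d) :=
  {y | ∀ x ∈ K, 0 ≤ ⟪x, y⟫}

lemma mem_solvencyCone_of_nonneg {d : ℕ} (π : Fin d → Fin d → ℝ) (x : E d)
    (hx : ∀ i, 0 ≤ x i) : x ∈ solvencyCone π := by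
  refine ⟨fun i => x i, 0, hx, fun i j => le_rfl, ?_⟩
  simp only [Pi.zero_apply, zero_smul, Finset.sum_const_zero, add_zero]
  ext j
  rw [WithLp.ofLp_sum, Finset.sum_apply]
  simp [EuclideanSpace.single_apply, mul_ite]

lemma single_mem_solvencyCone {d : ℕ} (π : Fin d → Fin d → ℝ) (i : Fin d) :
    EuclideanSpace.single i (1 : ℝ) ∈ solvencyCone π := by
  apply mem_solvencyCone_of_nonneg
  intro j
  rw [EuclideanSpace.single_apply]
  positivity

lemma vij_mem_solvencyCone {d : ℕ} (π : Fin d → Fin d → ℝ) (i j : Fin d) :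
    π i j • EuclideanSpace.single i (1 : ℝ) - EuclideanSpace.single j (1 : ℝ)
      ∈ solvencyCone π := by
  classical
  refine ⟨0, fun k l => (if k = i then (1:ℝ) else 0) * (if l = j then 1 else 0),
    fun _ => le_rfl, fun k l => by positivity, ?_⟩
  simp only [Pi.zero_apply, zero_smul, Finset.sum_const_zero, zero_add]
  simp [ite_mul, ite_smul, Finset.sum_ite_eq']

lemma dual_nonneg {d : ℕ} {π : Fin d → Fin d → ℝ} {z : E d}
    (hz : z ∈ dualCone (solvencyCone π)) (i : Fin d) : 0 ≤ z i := by
  have := hz _ (single_mem_solvencyCone π i)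
  simpa [EuclideanSpace.inner_single_left] using this

lemma dual_constraint {d : ℕ} {π : Fin d → Fin d → ℝ} {z : E d}
    (hz : z ∈ dualCone (solvencyCone π)) (i j : Fin d) : z j ≤ π i j * z i := by
  have := hz _ (vij_mem_solvencyCone π i j)
  rw [inner_sub_left, real_inner_smul_left] at this
  simp only [EuclideanSpace.inner_single_left, map_one, one_mul] at this
  linarith

lemma mem_dualCone_of {d : ℕ} (π : Fin d → Fin d → ℝ) (z : E d)
    (h1 : ∀ i, 0 ≤ z i) (h2 : ∀ i j, z j ≤ π i j * z i) :
    z ∈ dualCone (solvencyCone π) := by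
  rintro x ⟨a, b, ha, hb, rfl⟩
  rw [inner_add_left, sum_inner]
  refine add_nonneg (Finset.sum_nonneg fun i _ => ?_) ?_
  · rw [real_inner_smul_left, EuclideanSpace.inner_single_left]
    simp only [map_one, one_mul]
    exact mul_nonneg (ha i) (h1 i)
  · rw [sum_inner]
    refine Finset.sum_nonneg fun i _ => ?_
    rw [sum_inner]
    refine Finset.sum_nonneg fun j _ => ?_
    rw [real_inner_smul_left, inner_sub_left, real_inner_smul_left]
    simp only [EuclideanSpace.inner_single_left, map_one, one_mul]
    have h3 := h2 i j
    have h4 := hb i j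
    nlinarith

lemma exists_neg_smul_mem {d : ℕ} {S : Set (E d)}
    (h0 : (0 : E d) ∈ intrinsicInterior ℝ S) {y : E d} (hy : y ∈ S) :
    ∃ t : ℝ, 0 < t ∧ (-t) • y ∈ S := by
  obtain ⟨x0, hx0, hx0e⟩ := mem_intrinsicInterior.mp h0
  have h0S : (0 : E d) ∈ affineSpan ℝ S := hx0e ▸ x0.2
  have hyS : y ∈ affineSpan ℝ S := subset_affineSpan ℝ S hy
  have hline : ∀ t : ℝ, t • y ∈ affineSpan ℝ S := by
    intro t
    have := AffineSubspace.smul_vsub_vadd_mem (affineSpan ℝ S) t hyS h0S h0S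
    simpa using this
  set c : ℝ → affineSpan ℝ S := fun t => ⟨t • y, hline t⟩ with hc_def
  have hc : Continuous c := by
    apply Continuous.subtype_mk
    exact continuous_id.smul continuous_const
  have hc0 : c 0 = x0 := by
    apply Subtype.ext
    simp [hc_def, hx0e]
  have hopen : IsOpen (c ⁻¹' interior (((↑) : affineSpan ℝ S → E d) ⁻¹' S)) :=
    isOpen_interior.preimage hc
  have hmem0 : (0 : ℝ) ∈ c ⁻¹' interior (((↑) : affineSpan ℝ S → E d) ⁻¹' S) := by
    simp only [Set.mem_preimage, hc0]; exact hx0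
  obtain ⟨ε, hε, hball⟩ := Metric.isOpen_iff.mp hopen 0 hmem0
  refine ⟨ε / 2, by positivity, ?_⟩
  have : (-(ε / 2)) ∈ Metric.ball (0:ℝ) ε := by
    simp only [Metric.mem_ball, Real.dist_eq, sub_zero, abs_neg]
    rw [abs_of_pos (by positivity)]
    linarith
  have := interior_subset (hball this)
  simpa [hc_def] using this

lemma dual_pos {d : ℕ} {π : Fin d → Fin d → ℝ}
    (hπpos : ∀ i j, 0 < π i j) (hπtri : ∀ i j k, π i j ≤ π i k * π k j)
    {z : E d} (hz : z ∈ intrinsicInterior ℝ (dualCone (solvencyCone π)))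
    (i : Fin d) : 0 < z i := by
  have hzd : z ∈ dualCone (solvencyCone π) := intrinsicInterior_subset hz
  rcases (dual_nonneg hzd i).lt_or_eq with h | h
  · exact h
  exfalso
  have hall : ∀ j, z j = 0 := by
    intro j
    refine le_antisymm ?_ (dual_nonneg hzd j)
    have h2 := dual_constraint hzd i j
    rw [← h, mul_zero] at h2
    exact h2
  have hz0 : z = (0 : E d) := by
    ext j; exact hall j
  rw [hz0] at hz
  haveI : Nonempty (Fin d) := ⟨i⟩
  set y : E d := WithLp.toLp 2 (fun j => Finset.univ.inf' Finset.univ_nonempty (fun k => π k j)) with hy_def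
  have hy1 : ∀ j, 0 < y j := by
    intro j
    rw [hy_def]
    exact (Finset.lt_inf'_iff Finset.univ_nonempty).mpr fun k _ => hπpos k j
  have hy2 : ∀ a b, y b ≤ π a b * y a := by
    intro a b
    obtain ⟨k0, -, hk0⟩ := Finset.exists_mem_eq_inf' (Finset.univ_nonempty (α := Fin d))
      (fun m => π m a)
    have h1 : y b ≤ π k0 b := Finset.inf'_le _ (Finset.mem_univ k0)
    have h2 : π k0 b ≤ π k0 a * π a b := hπtri k0 b a
    have h3 : y a = π k0 a := hk0
    nlinarith [hπpos a b, hπpos k0 a]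
  have hy : y ∈ dualCone (solvencyCone π) := mem_dualCone_of π y (fun j => (hy1 j).le) hy2
  obtain ⟨t, ht, hmem⟩ := exists_neg_smul_mem hz hy
  have h4 := dual_nonneg hmem i
  have h5 : ((-t) • y) i = -t * y i := rfl
  rw [h5] at h4
  nlinarith [hy1 i]

/-- if a strictly consistent price process exists, the currency market
satisfies the no-arbitrage condition: any self-financing θ with θ_T ∈ ℝ_+^d a.s. has
θ_T ∈ K_T ∩ (−K_T) a.s. -/
theorem no_arbitrage_of_strictly_consistent {Ω : Type} [Fintype Ω] [DecidableEq Ω]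
    [Nonempty Ω] {d : ℕ} (T : ℕ)
    (P : Ω → ℝ) (hP : ∀ ω, 0 < P ω) (hP1 : ∑ ω, P ω = 1)
    (atom : ℕ → Ω → Finset Ω)
    (hmem : ∀ t ω, ω ∈ atom t ω)
    (hpart : ∀ t ω ω', ω' ∈ atom t ω → atom t ω' = atom t ω)
    (hrefine : ∀ t ω, atom (t + 1) ω ⊆ atom t ω)
    (h0 : ∀ ω, atom 0 ω = Finset.univ)
    (hT : ∀ ω, atom T ω = {ω})
    -- adapted bid-ask matrix process and solvency cones
    (π : ℕ → Ω → Fin d → Fin d → ℝ)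
    (hπpos : ∀ t ω i j, 0 < π t ω i j)
    (hπdiag : ∀ t ω i, π t ω i i = 1)
    (hπtri : ∀ t ω i j k, π t ω i j ≤ π t ω i k * π t ω k j)
    (hπadapted : ∀ t ω ω', t ≤ T → ω' ∈ atom t ω → π t ω' = π t ω)
    (K : ℕ → Ω → Set (E d)) (hK : ∀ t ω, K t ω = solvencyCone (π t ω))
    -- a strictly consistent price process Z
    (Z : ℕ → Ω → E d)
    (hZadapted : ∀ t ω ω', t ≤ T → ω' ∈ atom t ω → Z t ω' = Z t ω)
    (hZri : ∀ t ω, t ≤ T → Z t ω ∈ intrinsicInterior ℝ (dualCone (K t ω)))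
    (hZmart : ∀ t ω, t < T →
      (∑ ω' ∈ atom t ω, P ω')⁻¹ • ∑ ω' ∈ atom t ω, P ω' • Z (t + 1) ω' = Z t ω) :
    -- no arbitrage
    ∀ θ : ℕ → Ω → E d,
      (∀ t ω ω', t ≤ T → ω' ∈ atom t ω → θ t ω' = θ t ω) →
      (∀ ω, θ 0 ω ∈ -K 0 ω) →
      (∀ t ω, t < T → θ (t + 1) ω - θ t ω ∈ -K (t + 1) ω) →
      (∀ ω i, 0 ≤ θ T ω i) →
      ∀ ω, θ T ω ∈ K T ω ∩ -K T ω := by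
  intro θ hθad hθ0 hstep hθT ω0
  have hinner_nonpos : ∀ (t : ℕ) (ω : Ω) (x : E d), t ≤ T → x ∈ -K t ω →
      ⟪x, Z t ω⟫ ≤ 0 := by
    intro t ω x ht hx
    have hzd : Z t ω ∈ dualCone (K t ω) := intrinsicInterior_subset (hZri t ω ht)
    rw [Set.mem_neg] at hx
    have h := hzd _ hx
    rw [inner_neg_left] at h
    linarith
  have key : ∀ t, t ≤ T → ∑ ω, P ω * ⟪θ t ω, Z t ω⟫ ≤ 0 := by
    intro t
    induction t with
    | zero =>
      intro _
      exact Finset.sum_nonpos fun ω _ => mul_nonpos_of_nonneg_of_nonpos (hP ω).le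
        (hinner_nonpos 0 ω _ (Nat.zero_le T) (hθ0 ω))
    | succ t ih =>
      intro ht1
      have htT : t < T := Nat.lt_of_succ_le ht1
      have htle : t ≤ T := htT.le
      have hc : ∀ ω : Ω, 0 < ∑ ω' ∈ atom t ω, P ω' :=
        fun ω => Finset.sum_pos' (fun ω' _ => (hP ω').le) ⟨ω, hmem t ω, hP ω⟩
      have hsum : ∀ ω : Ω, ∑ ω' ∈ atom t ω, P ω' • Z (t+1) ω'
          = (∑ ω' ∈ atom t ω, P ω') • Z t ω := by
        intro ω
        rw [← hZmart t ω htT, smul_smul, mul_inv_cancel₀ (hc ω).ne', one_smul]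
      have evalR : ∀ ω : Ω, ∑ ω' ∈ atom t ω,
          (P ω / (∑ u ∈ atom t ω, P u)) * (P ω' * ⟪θ t ω, Z (t+1) ω'⟫)
          = P ω * ⟪θ t ω, Z t ω⟫ := by
        intro ω
        rw [← Finset.mul_sum]
        have h1 : ∑ ω' ∈ atom t ω, P ω' * ⟪θ t ω, Z (t+1) ω'⟫
            = ⟪θ t ω, ∑ ω' ∈ atom t ω, P ω' • Z (t+1) ω'⟫ := by
          rw [inner_sum]
          exact Finset.sum_congr rfl fun ω' _ => (real_inner_smul_right _ _ _).symm
        rw [h1, hsum ω, real_inner_smul_right]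
        have hcne := (hc ω).ne'
        field_simp
      have evalL : ∀ ω' : Ω, ∑ ω ∈ atom t ω',
          (P ω / (∑ u ∈ atom t ω, P u)) * (P ω' * ⟪θ t ω, Z (t+1) ω'⟫)
          = P ω' * ⟪θ t ω', Z (t+1) ω'⟫ := by
        intro ω'
        have step : ∀ ω ∈ atom t ω',
            (P ω / (∑ u ∈ atom t ω, P u)) * (P ω' * ⟪θ t ω, Z (t+1) ω'⟫)
            = P ω * ((∑ u ∈ atom t ω', P u)⁻¹ * (P ω' * ⟪θ t ω', Z (t+1) ω'⟫)) := by
          intro ω hω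
          rw [hpart t ω' ω hω, hθad t ω' ω htle hω, div_eq_mul_inv, mul_assoc]
        rw [Finset.sum_congr rfl step, ← Finset.sum_mul, ← mul_assoc,
          mul_inv_cancel₀ (hc ω').ne', one_mul]
      have hsymm : ∀ x y : Ω, (x ∈ Finset.univ ∧ y ∈ atom t x) ↔
          (x ∈ atom t y ∧ y ∈ Finset.univ) := by
        intro x y
        simp only [Finset.mem_univ, true_and, and_true]
        constructor
        · intro h
          rw [hpart t x y h]
          exact hmem t x
        · intro h
          rw [hpart t y x h]
          exact hmem t y
      have hmart : ∑ ω, P ω * ⟪θ t ω, Z (t+1) ω⟫ = ∑ ω, P ω * ⟪θ t ω, Z t ω⟫ := by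
        calc ∑ ω', P ω' * ⟪θ t ω', Z (t+1) ω'⟫
            = ∑ ω', ∑ ω ∈ atom t ω',
                (P ω / (∑ u ∈ atom t ω, P u)) * (P ω' * ⟪θ t ω, Z (t+1) ω'⟫) :=
              Finset.sum_congr rfl fun ω' _ => (evalL ω').symm
          _ = ∑ ω, ∑ ω' ∈ atom t ω,
                (P ω / (∑ u ∈ atom t ω, P u)) * (P ω' * ⟪θ t ω, Z (t+1) ω'⟫) :=
              (Finset.sum_comm' hsymm).symm
          _ = ∑ ω, P ω * ⟪θ t ω, Z t ω⟫ := Finset.sum_congr rfl fun ω _ => evalR ω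
      calc ∑ ω, P ω * ⟪θ (t+1) ω, Z (t+1) ω⟫
          = ∑ ω, (P ω * ⟪θ (t+1) ω - θ t ω, Z (t+1) ω⟫ + P ω * ⟪θ t ω, Z (t+1) ω⟫) := by
            refine Finset.sum_congr rfl fun ω _ => ?_
            rw [← mul_add, ← inner_add_left, sub_add_cancel]
        _ = (∑ ω, P ω * ⟪θ (t+1) ω - θ t ω, Z (t+1) ω⟫)
              + ∑ ω, P ω * ⟪θ t ω, Z (t+1) ω⟫ := Finset.sum_add_distrib
        _ ≤ 0 + ∑ ω, P ω * ⟪θ t ω, Z t ω⟫ := by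
            rw [hmart]
            refine add_le_add_left (Finset.sum_nonpos fun ω _ =>
              mul_nonpos_of_nonneg_of_nonpos (hP ω).le
                (hinner_nonpos (t+1) ω _ ht1 (hstep t ω htT))) _
        _ = ∑ ω, P ω * ⟪θ t ω, Z t ω⟫ := zero_add _
        _ ≤ 0 := ih htle
  -- nonnegativity of each term at time T
  have hzpos : ∀ ω i, 0 < Z T ω i := by
    intro ω i
    have h := hZri T ω le_rfl
    rw [hK] at h
    exact dual_pos (hπpos T ω) (hπtri T ω) h i
  have hinner_expand : ∀ ω, ⟪θ T ω, Z T ω⟫ = ∑ i, θ T ω i * Z T ω i := by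
    intro ω
    rw [PiLp.inner_apply]
    simp [RCLike.inner_apply, conj_trivial]; exact Finset.sum_congr rfl fun i _ => mul_comm _ _
  have hterm_nonneg : ∀ ω ∈ Finset.univ, (0:ℝ) ≤ P ω * ⟪θ T ω, Z T ω⟫ := by
    intro ω _
    refine mul_nonneg (hP ω).le ?_
    rw [hinner_expand]
    exact Finset.sum_nonneg fun i _ => mul_nonneg (hθT ω i) (hzpos ω i).le
  have hsum0 : ∑ ω, P ω * ⟪θ T ω, Z T ω⟫ = 0 :=
    le_antisymm (key T le_rfl) (Finset.sum_nonneg hterm_nonneg)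
  have hzero := (Finset.sum_eq_zero_iff_of_nonneg hterm_nonneg).mp hsum0 ω0
    (Finset.mem_univ ω0)
  have hinner0 : ⟪θ T ω0, Z T ω0⟫ = 0 :=
    (mul_eq_zero.mp hzero).resolve_left (hP ω0).ne'
  have hθzero : θ T ω0 = 0 := by
    rw [hinner_expand] at hinner0
    ext i
    have h := (Finset.sum_eq_zero_iff_of_nonneg
      (fun i _ => mul_nonneg (hθT ω0 i) (hzpos ω0 i).le)).mp hinner0 i (Finset.mem_univ i)
    exact (mul_eq_zero.mp h).resolve_right (hzpos ω0 i).ne'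
  rw [hθzero, hK]
  constructor
  · exact mem_solvencyCone_of_nonneg _ 0 fun i => le_rfl
  · rw [Set.mem_neg, neg_zero]
    exact mem_solvencyCone_of_nonneg _ 0 fun i => le_rfl
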